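/- (Marcinkiewicz–Zygmund type strong law for triangular arrays.) Let {X_{ni} : 1 ≤ i ≤ m_n}, n ∈ ℕ, be a triangular array where each row consists of i.i.d. copies of a mean-zero random variable X with E|X|^{2p} < ∞ for some p ∈ [1,2), and m_n ↑ ∞. Then m_n^{-1/p} Σ_{i=1}^{m_n} X_{ni} → 0 almost surely. -/

import Mathlib

open Filter MeasureTheory ProbabilityTheory
open scoped ENNReal

set_option linter.unusedSectionVars false
set_option maxHeartbeats 1000000

namespace MZAux

variable {Ω : Type*} [MeasurableSpace Ω]

/-- block sum over indices in `[a, b)` -/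
def bS {M : ℕ} (ξ : Fin M → Ω → ℝ) (a b : ℕ) (ω : Ω) : ℝ :=
  ∑ i ∈ Finset.univ.filter (fun i : Fin M => a ≤ (i : ℕ) ∧ (i : ℕ) < b), ξ i ω

lemma bS_apply {M : ℕ} (ξ : Fin M → Ω → ℝ) (a b : ℕ) (ω : Ω) :
    bS ξ a b ω = ∑ i ∈ Finset.univ.filter (fun i : Fin M => a ≤ (i : ℕ) ∧ (i : ℕ) < b), ξ i ω :=
  rfl

lemma bS_of_le {M : ℕ} (ξ : Fin M → Ω → ℝ) {a b : ℕ} (h : b ≤ a) (ω : Ω) :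
    bS ξ a b ω = 0 := by
  rw [bS_apply]
  apply Finset.sum_eq_zero
  intro i hi
  simp only [Finset.mem_filter] at hi
  exact absurd hi.2 (by omega)

lemma bS_split {M : ℕ} (ξ : Fin M → Ω → ℝ) {a b c : ℕ} (hab : a ≤ b) (hbc : b ≤ c) (ω : Ω) :
    bS ξ a b ω + bS ξ b c ω = bS ξ a c ω := by
  classical
  simp only [bS_apply, Finset.sum_filter]
  rw [← Finset.sum_add_distrib]
  refine Finset.sum_congr rfl fun i _ => ?_
  by_cases h1 : a ≤ (i : ℕ) ∧ (i : ℕ) < b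
  · rw [if_pos h1, if_neg (by omega), if_pos (by omega)]; ring
  · by_cases h2 : b ≤ (i : ℕ) ∧ (i : ℕ) < c
    · rw [if_neg h1, if_pos h2, if_pos (by omega)]; ring
    · rw [if_neg h1, if_neg h2, if_neg (by omega)]; ring

lemma bS_single {M : ℕ} (ξ : Fin M → Ω → ℝ) {k : ℕ} (hk : k < M) (ω : Ω) :
    bS ξ k (k+1) ω = ξ ⟨k, hk⟩ ω := by
  rw [bS_apply, show Finset.univ.filter (fun i : Fin M => k ≤ (i : ℕ) ∧ (i : ℕ) < k+1)
      = {⟨k, hk⟩} from by ext i; simp [Fin.ext_iff]; omega, Finset.sum_singleton]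

lemma bS_univ {M : ℕ} (ξ : Fin M → Ω → ℝ) (ω : Ω) :
    bS ξ 0 M ω = ∑ i, ξ i ω := by
  rw [bS_apply]
  refine Finset.sum_congr ?_ fun _ _ => rfl
  ext i; simp [i.isLt]

lemma measurable_bS {M : ℕ} {ξ : Fin M → Ω → ℝ} (hmeas : ∀ i, Measurable (ξ i)) (a b : ℕ) :
    Measurable (fun ω => bS ξ a b ω) :=
  Finset.measurable_sum _ fun i _ => hmeas i

theorem sum_subtype_ite {M : ℕ} (T : Finset (Fin M)) (cond : Fin M → Prop) [DecidablePred cond]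
    (hsub : ∀ i, cond i → i ∈ T) (f : Fin M → ℝ) :
    ∑ i ∈ Finset.univ.filter cond, f i = ∑ i : T, if cond (i : Fin M) then f (i : Fin M) else 0 := by
  rw [Finset.sum_coe_sort T (fun i => if cond i then f i else 0), ← Finset.sum_filter]
  refine Finset.sum_congr ?_ fun _ _ => rfl
  ext i
  simp only [Finset.mem_filter, Finset.mem_univ, true_and]
  exact ⟨fun h => ⟨hsub i h, h⟩, fun h => h.2⟩

theorem measurable_condSum {M : ℕ} (T : Finset (Fin M)) (cond : Fin M → Prop) [DecidablePred cond] :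
    Measurable (fun w : ↥T → ℝ => ∑ i : ↥T, if cond (i : Fin M) then w i else 0) := by
  apply Finset.measurable_sum
  intro i _
  by_cases h : cond (i : Fin M)
  · simp only [if_pos h]; exact measurable_pi_apply i
  · simp only [if_neg h]; exact measurable_const

def Tlo (M k : ℕ) : Finset (Fin M) := Finset.univ.filter (fun i : Fin M => (i : ℕ) < k)
def Thi (M k : ℕ) : Finset (Fin M) := Finset.univ.filter (fun i : Fin M => ¬ (i : ℕ) < k)

theorem indep_split (P : Measure Ω) [IsProbabilityMeasure P] {M : ℕ} {ξ : Fin M → Ω → ℝ}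
    (hind : iIndepFun ξ P)
    (hmeas : ∀ i, Measurable (ξ i)) (k : ℕ)
    {A : Set (↥(Tlo M k) → ℝ)} {B : Set (↥(Thi M k) → ℝ)}
    (hA : MeasurableSet A) (hB : MeasurableSet B) :
    P ((fun ω (i : ↥(Tlo M k)) => ξ i ω) ⁻¹' A ∩ (fun ω (i : ↥(Thi M k)) => ξ i ω) ⁻¹' B)
      = P ((fun ω (i : ↥(Tlo M k)) => ξ i ω) ⁻¹' A)
        * P ((fun ω (i : ↥(Thi M k)) => ξ i ω) ⁻¹' B) :=
  (hind.indepFun_finset (Tlo M k) (Thi M k) (Finset.disjoint_filter_filter_not _ _ _)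
    hmeas).measure_inter_preimage_eq_mul A B hA hB

theorem cheb (P : Measure Ω) [IsProbabilityMeasure P] {M : ℕ} {ξ : Fin M → Ω → ℝ}
    (hind : iIndepFun ξ P)
    (hmeas : ∀ i, Measurable (ξ i))
    {c v : ℝ} (hb : ∀ i ω, |ξ i ω| ≤ c)
    (hmean : ∀ i, ∫ ω, ξ i ω ∂P = 0) (hv : ∀ i, ∫ ω, (ξ i ω)^2 ∂P ≤ v) (hv0 : 0 ≤ v)
    (T : Finset (Fin M)) {u : ℝ} (hu : 0 < u) :
    P {ω | u < |∑ i ∈ T, ξ i ω|} ≤ ENNReal.ofReal ((M * v) / u^2) := by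
  have hmem : ∀ i : Fin M, MemLp (ξ i) 2 P := fun i =>
    MemLp.of_bound (hmeas i).aestronglyMeasurable c (Eventually.of_forall fun ω => by
      simpa [Real.norm_eq_abs] using hb i ω)
  set Y : Ω → ℝ := ∑ i ∈ T, ξ i with hY
  have hYapp : ∀ ω, Y ω = ∑ i ∈ T, ξ i ω := fun ω => by simp [hY, Finset.sum_apply]
  have hYmem : MemLp Y 2 P := memLp_finset_sum' T fun i _ => hmem i
  have hEY : ∫ ω, Y ω ∂P = 0 := by
    simp only [hYapp]
    rw [integral_finset_sum T (fun i _ => (hmem i).integrable one_le_two)]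
    simp [hmean]
  have hvar : variance Y P ≤ M * v := by
    rw [hY, IndepFun.variance_sum (fun i _ => hmem i)
      (fun i _ j _ hij => hind.indepFun hij)]
    calc ∑ i ∈ T, variance (ξ i) P ≤ ∑ _i ∈ T, v := by
          refine Finset.sum_le_sum fun i _ => ?_
          rw [variance_eq_sub (hmem i)]
          have h1 : (∫ ω, (ξ i ^ 2) ω ∂P) = ∫ ω, (ξ i ω)^2 ∂P := by
            refine integral_congr_ae (Eventually.of_forall fun ω => ?_); simp
          have h2 : (∫ ω, ξ i ω ∂P) = 0 := hmean i
          simp only [h1]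
          rw [show (P[ξ i] : ℝ) = 0 from h2]
          simpa using hv i
      _ ≤ M * v := by
          rw [Finset.sum_const, nsmul_eq_mul]
          refine mul_le_mul_of_nonneg_right ?_ hv0
          exact_mod_cast Finset.card_le_card (Finset.subset_univ T) |>.trans
            (le_of_eq (by simp))
  have key := meas_ge_le_variance_div_sq (μ := P) hYmem hu
  have hsub : {ω | u < |∑ i ∈ T, ξ i ω|} ⊆ {ω | u ≤ |Y ω - ∫ ω, Y ω ∂P|} := by
    intro ω hω
    rw [Set.mem_setOf_eq, hEY, sub_zero, hYapp]
    exact le_of_lt hω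
  calc P {ω | u < |∑ i ∈ T, ξ i ω|} ≤ P {ω | u ≤ |Y ω - ∫ ω, Y ω ∂P|} := measure_mono hsub
    _ ≤ ENNReal.ofReal (variance Y P / u^2) := key
    _ ≤ ENNReal.ofReal ((M * v) / u^2) := by
        apply ENNReal.ofReal_le_ofReal
        gcongr


theorem etemadi (P : Measure Ω) [IsProbabilityMeasure P] {M : ℕ} {ξ : Fin M → Ω → ℝ}
    (hind : iIndepFun ξ P)
    (hmeas : ∀ i, Measurable (ξ i))
    {c v : ℝ} (hb : ∀ i ω, |ξ i ω| ≤ c)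
    (hmean : ∀ i, ∫ ω, ξ i ω ∂P = 0) (hv : ∀ i, ∫ ω, (ξ i ω)^2 ∂P ≤ v) (hv0 : 0 ≤ v)
    (a : ℕ) {u : ℝ} (hu : 0 < u) :
    P {ω | ∃ l, a < l ∧ l ≤ M ∧ 3 * u < |bS ξ a l ω|}
      ≤ 2 * ENNReal.ofReal ((M * v) / u^2) := by
  classical
  set B := ENNReal.ofReal (((M : ℝ) * v) / u ^ 2) with hB
  have hMv0 : 0 ≤ (M : ℝ) * v := mul_nonneg (Nat.cast_nonneg M) hv0
  set E : ℕ → Set Ω := fun l =>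
    {ω | (∀ j, a < j → j < l → |bS ξ a j ω| ≤ 3 * u) ∧ 3 * u < |bS ξ a l ω|} with hE
  set F : ℕ → Set Ω := fun l => {ω | 2 * u < |bS ξ l M ω|} with hF
  -- inclusion
  have hincl : {ω | ∃ l, a < l ∧ l ≤ M ∧ 3 * u < |bS ξ a l ω|}
      ⊆ {ω | u < |bS ξ a M ω|} ∪ ⋃ l ∈ Finset.Ioc a M, E l ∩ F l := by
    intro ω hω
    by_cases hM : u < |bS ξ a M ω|
    · exact Or.inl hM
    right
    obtain ⟨l, hl⟩ := hω
    have hex : ∃ l, a < l ∧ l ≤ M ∧ 3 * u < |bS ξ a l ω| := ⟨l, hl⟩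
    set l₀ := Nat.find hex with hl₀
    obtain ⟨h1, h2, h3⟩ := Nat.find_spec hex
    refine Set.mem_biUnion (Finset.mem_Ioc.mpr ⟨h1, h2⟩) ?_
    refine ⟨⟨fun j hj1 hj2 => ?_, h3⟩, ?_⟩
    · by_contra hcon
      push_neg at hcon
      exact Nat.find_min hex hj2 ⟨hj1, le_trans hj2.le h2, hcon⟩
    · -- F l₀
      show 2 * u < |bS ξ l₀ M ω|
      have hsplit : bS ξ a l₀ ω + bS ξ l₀ M ω = bS ξ a M ω := bS_split ξ h1.le h2 ω
      have habs : |bS ξ a l₀ ω| - |bS ξ a M ω| ≤ |bS ξ l₀ M ω| := by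
        have h' := abs_sub_abs_le_abs_sub (bS ξ a l₀ ω) (bS ξ a M ω)
        rw [show bS ξ a l₀ ω - bS ξ a M ω = -(bS ξ l₀ M ω) from by linarith, abs_neg] at h'
        exact h'
      push_neg at hM
      linarith
  -- measurability of E
  have hEmeas : ∀ l, MeasurableSet (E l) := by
    intro l
    have : E l = (⋂ j, ⋂ _ : a < j, ⋂ _ : j < l, {ω | |bS ξ a j ω| ≤ 3 * u})
        ∩ {ω | 3 * u < |bS ξ a l ω|} := by
      ext ω; simp only [hE, Set.mem_setOf_eq, Set.mem_inter_iff, Set.mem_iInter]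
    rw [this]
    exact MeasurableSet.inter
      (MeasurableSet.iInter fun j => MeasurableSet.iInter fun _ => MeasurableSet.iInter fun _ =>
        measurableSet_le ((measurable_bS hmeas a j).abs) measurable_const)
      (measurableSet_lt measurable_const ((measurable_bS hmeas a l).abs))
  -- key product bound for each l
  have hprod : ∀ l ∈ Finset.Ioc a M, P (E l ∩ F l) ≤ P (E l) * B := by
    intro l hl
    rw [Finset.mem_Ioc] at hl
    -- representations
    set gg : ℕ → (↥(Tlo M l) → ℝ) → ℝ := fun j w =>
      ∑ i : ↥(Tlo M l), if a ≤ ((i : Fin M) : ℕ) ∧ ((i : Fin M) : ℕ) < j then w i else 0 with hgg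
    set hh : (↥(Thi M l) → ℝ) → ℝ := fun w =>
      ∑ i : ↥(Thi M l), if l ≤ ((i : Fin M) : ℕ) ∧ ((i : Fin M) : ℕ) < M then w i else 0 with hhh
    have keyg : ∀ (ω : Ω) (j : ℕ), j ≤ l → gg j (fun i : ↥(Tlo M l) => ξ i ω) = bS ξ a j ω := by
      intro ω j hj
      rw [bS_apply, sum_subtype_ite (Tlo M l) (fun i : Fin M => a ≤ (i:ℕ) ∧ (i:ℕ) < j)
        (fun i hi => by simp only [Tlo, Finset.mem_filter, Finset.mem_univ, true_and]; omega)
        (fun i => ξ i ω)]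
    have keyh : ∀ ω : Ω, hh (fun i : ↥(Thi M l) => ξ i ω) = bS ξ l M ω := by
      intro ω
      rw [bS_apply, sum_subtype_ite (Thi M l) (fun i : Fin M => l ≤ (i:ℕ) ∧ (i:ℕ) < M)
        (fun i hi => by simp only [Thi, Finset.mem_filter, Finset.mem_univ, true_and]; omega)
        (fun i => ξ i ω)]
    have hErep : E l = (fun ω (i : ↥(Tlo M l)) => ξ i ω) ⁻¹'
        {w | (∀ j, a < j → j < l → |gg j w| ≤ 3 * u) ∧ 3 * u < |gg l w|} := by
      ext ω
      simp only [hE, Set.mem_setOf_eq, Set.mem_preimage]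
      constructor
      · rintro ⟨hj, hl'⟩
        exact ⟨fun j h1 h2 => by rw [keyg ω j h2.le]; exact hj j h1 h2, by rw [keyg ω l le_rfl]; exact hl'⟩
      · rintro ⟨hj, hl'⟩
        refine ⟨fun j h1 h2 => ?_, by rw [← keyg ω l le_rfl]; exact hl'⟩
        have := hj j h1 h2; rwa [keyg ω j h2.le] at this
    have hFrep : F l = (fun ω (i : ↥(Thi M l)) => ξ i ω) ⁻¹' {w | 2 * u < |hh w|} := by
      ext ω
      simp only [hF, Set.mem_setOf_eq, Set.mem_preimage, keyh ω]
    have hAm : MeasurableSet {w : ↥(Tlo M l) → ℝ |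
        (∀ j, a < j → j < l → |gg j w| ≤ 3 * u) ∧ 3 * u < |gg l w|} := by
      have : {w : ↥(Tlo M l) → ℝ | (∀ j, a < j → j < l → |gg j w| ≤ 3 * u) ∧ 3 * u < |gg l w|}
          = (⋂ j, ⋂ _ : a < j, ⋂ _ : j < l, {w | |gg j w| ≤ 3 * u}) ∩ {w | 3 * u < |gg l w|} := by
        ext w; simp only [Set.mem_setOf_eq, Set.mem_inter_iff, Set.mem_iInter]
      rw [this]
      refine MeasurableSet.inter
        (MeasurableSet.iInter fun j => MeasurableSet.iInter fun _ => MeasurableSet.iInter fun _ =>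
          measurableSet_le (Measurable.abs ?_) measurable_const)
        (measurableSet_lt measurable_const (Measurable.abs ?_))
      · exact measurable_condSum (Tlo M l) (fun i : Fin M => a ≤ (i:ℕ) ∧ (i:ℕ) < j)
      · exact measurable_condSum (Tlo M l) (fun i : Fin M => a ≤ (i:ℕ) ∧ (i:ℕ) < l)
    have hBm : MeasurableSet {w : ↥(Thi M l) → ℝ | 2 * u < |hh w|} :=
      measurableSet_lt measurable_const
        (Measurable.abs (measurable_condSum (Thi M l) (fun i : Fin M => l ≤ (i:ℕ) ∧ (i:ℕ) < M)))
    have hFbound : P (F l) ≤ B := by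
      have h2u : (0:ℝ) < 2 * u := by linarith
      have := cheb P hind hmeas hb hmean hv hv0
        (Finset.univ.filter (fun i : Fin M => l ≤ (i:ℕ) ∧ (i:ℕ) < M)) h2u
      refine le_trans (le_of_eq ?_) (this.trans ?_)
      · congr 1
      · rw [hB]
        apply ENNReal.ofReal_le_ofReal
        have h4 : u^2 ≤ (2*u)^2 := by nlinarith
        gcongr
    calc P (E l ∩ F l) = P (E l) * P (F l) := by
          rw [hErep, hFrep]
          exact indep_split P hind hmeas l hAm hBm
      _ ≤ P (E l) * B := mul_le_mul_right hFbound _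
  -- disjointness of E
  have hdisjE : Set.PairwiseDisjoint ↑(Finset.Ioc a M) E := by
    intro l hl l' hl' hne
    simp only [Finset.coe_Ioc, Set.mem_Ioc] at hl hl'
    have key : ∀ x y, a < x → x < y → Disjoint (E x) (E y) := by
      intro x y hax hxy
      rw [Set.disjoint_left]
      rintro ω ⟨_, h2⟩ ⟨h1', _⟩
      exact absurd h2 (not_lt.mpr (h1' x hax hxy))
    rcases lt_or_gt_of_ne hne with h | h
    · exact key l l' hl.1 h
    · exact (key l' l hl'.1 h).symm
  calc P {ω | ∃ l, a < l ∧ l ≤ M ∧ 3 * u < |bS ξ a l ω|}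
      ≤ P ({ω | u < |bS ξ a M ω|} ∪ ⋃ l ∈ Finset.Ioc a M, E l ∩ F l) := measure_mono hincl
    _ ≤ P {ω | u < |bS ξ a M ω|} + P (⋃ l ∈ Finset.Ioc a M, E l ∩ F l) := measure_union_le _ _
    _ ≤ B + ∑ l ∈ Finset.Ioc a M, P (E l ∩ F l) := by
        refine add_le_add ?_ (measure_biUnion_finset_le _ _)
        have h1 := cheb P hind hmeas hb hmean hv hv0
          (Finset.univ.filter (fun i : Fin M => a ≤ (i:ℕ) ∧ (i:ℕ) < M)) hu
        exact h1
    _ ≤ B + ∑ l ∈ Finset.Ioc a M, P (E l) * B := add_le_add_right (Finset.sum_le_sum hprod) _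
    _ = B + (∑ l ∈ Finset.Ioc a M, P (E l)) * B := by rw [Finset.sum_mul]
    _ ≤ B + 1 * B := by
        refine add_le_add_right (mul_le_mul_left ?_ _) _
        rw [← measure_biUnion_finset hdisjE (fun l _ => hEmeas l)]
        exact prob_le_one
    _ = 2 * B := by rw [one_mul, two_mul]


theorem row_bound (P : Measure Ω) [IsProbabilityMeasure P] {M : ℕ} {ξ : Fin M → Ω → ℝ}
    (hind : iIndepFun ξ P)
    (hmeas : ∀ i, Measurable (ξ i))
    {c v t : ℝ} (hb : ∀ i ω, |ξ i ω| ≤ c)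
    (hmean : ∀ i, ∫ ω, ξ i ω ∂P = 0) (hv : ∀ i, ∫ ω, (ξ i ω)^2 ∂P ≤ v) (hv0 : 0 ≤ v)
    (ht : 0 < t) (hct : c ≤ t) (J : ℕ) :
    P {ω | (3:ℝ)^J * t < |∑ i, ξ i ω|}
      ≤ (2 * ENNReal.ofReal (9 * ((M:ℝ) * v) / t^2))^(J+1) := by
  classical
  set B := ENNReal.ofReal (9 * ((M:ℝ) * v) / t ^ 2) with hB
  have hMv0 : 0 ≤ (M : ℝ) * v := mul_nonneg (Nat.cast_nonneg M) hv0
  have hetem : ∀ (aa : ℕ) (L : ℝ), t ≤ L →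
      P {ω | ∃ l, aa < l ∧ l ≤ M ∧ L < |bS ξ aa l ω|} ≤ 2 * B := by
    intro aa L hL
    have hu : 0 < L / 3 := by linarith
    have h3 : (3:ℝ) * (L / 3) = L := by ring
    have h := etemadi P hind hmeas hb hmean hv hv0 aa hu
    rw [h3] at h
    refine h.trans ?_
    rw [hB]
    refine mul_le_mul_right (ENNReal.ofReal_le_ofReal ?_) _
    have heq : (M:ℝ) * v / (L/3)^2 = 9 * ((M:ℝ) * v) / L^2 := by
      field_simp
      ring
    rw [heq]
    have hL2 : t^2 ≤ L^2 := by nlinarith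
    gcongr
  set Qev : ℕ → Set Ω := fun j => {ω | ∃ l, l ≤ M ∧ (3:ℝ)^j * t < |bS ξ 0 l ω|} with hQ
  have hQ0 : P (Qev 0) ≤ 2 * B := by
    refine le_trans (measure_mono ?_) (hetem 0 t le_rfl)
    intro ω hω
    obtain ⟨l, hlM, hl⟩ := hω
    rw [pow_zero, one_mul] at hl
    refine ⟨l, ?_, hlM, hl⟩
    rcases Nat.eq_zero_or_pos l with h | h
    · exfalso
      rw [h, bS_of_le ξ le_rfl ω] at hl
      simp only [abs_zero] at hl
      linarith
    · exact h
  have hstep : ∀ j, P (Qev (j+1)) ≤ (2 * B) * P (Qev j) := by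
    intro j
    set L : ℝ := (3:ℝ)^j * t with hLdef
    have h3j : (1:ℝ) ≤ (3:ℝ)^j := one_le_pow₀ (by norm_num)
    have hLt : t ≤ L := by nlinarith
    have hL0 : 0 < L := lt_of_lt_of_le ht hLt
    have h31 : (3:ℝ)^(j+1) * t = 3 * L := by rw [pow_succ]; ring
    set Ek : ℕ → Set Ω := fun k =>
      {ω | (∀ j', j' < k → |bS ξ 0 j' ω| ≤ L) ∧ L < |bS ξ 0 k ω|} with hEk
    set Gk : ℕ → Set Ω := fun k => {ω | ∃ l, k < l ∧ l ≤ M ∧ L < |bS ξ k l ω|} with hGk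
    have hincl : Qev (j+1) ⊆ ⋃ k ∈ Finset.Icc 1 M, Ek k ∩ Gk k := by
      intro ω hω
      obtain ⟨l, hlM, hl⟩ := hω
      rw [h31] at hl
      have hex : ∃ k, L < |bS ξ 0 k ω| := ⟨l, by nlinarith⟩
      set k₀ := Nat.find hex with hk₀def
      have hk₀ : L < |bS ξ 0 k₀ ω| := Nat.find_spec hex
      have hmin : ∀ j', j' < k₀ → ¬ L < |bS ξ 0 j' ω| := fun j' h => Nat.find_min hex h
      have hk₀pos : 1 ≤ k₀ := by
        rcases Nat.eq_zero_or_pos k₀ with h | h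
        · exfalso
          rw [h, bS_of_le ξ le_rfl ω] at hk₀
          simp only [abs_zero] at hk₀
          linarith
        · exact h
      have hk₀le : k₀ ≤ l := by
        by_contra hcon
        push_neg at hcon
        exact hmin l hcon (by nlinarith)
      have hk₀M : k₀ ≤ M := le_trans hk₀le hlM
      have hlt : k₀ - 1 < M := by omega
      have hbound : |bS ξ 0 k₀ ω| ≤ 2 * L := by
        have h1 : |bS ξ 0 (k₀-1) ω| ≤ L := le_of_not_gt (hmin (k₀-1) (by omega))
        have h2 : bS ξ 0 (k₀-1) ω + bS ξ (k₀-1) k₀ ω = bS ξ 0 k₀ ω :=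
          bS_split ξ (Nat.zero_le _) (by omega) ω
        have h3' : bS ξ (k₀-1) k₀ ω = ξ ⟨k₀-1, hlt⟩ ω := by
          have hs := bS_single ξ hlt ω
          rwa [show k₀ - 1 + 1 = k₀ from by omega] at hs
        have h4 := hb ⟨k₀-1, hlt⟩ ω
        calc |bS ξ 0 k₀ ω| = |bS ξ 0 (k₀-1) ω + bS ξ (k₀-1) k₀ ω| := by rw [h2]
          _ ≤ |bS ξ 0 (k₀-1) ω| + |bS ξ (k₀-1) k₀ ω| := abs_add_le _ _
          _ ≤ L + L := add_le_add h1 (by rw [h3']; linarith)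
          _ = 2 * L := by ring
      have hk₀lt : k₀ < l := by
        rcases eq_or_lt_of_le hk₀le with h | h
        · exfalso; rw [h] at hbound; nlinarith
        · exact h
      refine Set.mem_biUnion (Finset.mem_Icc.mpr ⟨hk₀pos, hk₀M⟩)
        ⟨⟨fun j' hj' => le_of_not_gt (hmin j' hj'), hk₀⟩, ⟨l, hk₀lt, hlM, ?_⟩⟩
      have hsp : bS ξ 0 k₀ ω + bS ξ k₀ l ω = bS ξ 0 l ω :=
        bS_split ξ (Nat.zero_le _) hk₀le ω
      have habs : |bS ξ 0 l ω| - |bS ξ 0 k₀ ω| ≤ |bS ξ k₀ l ω| := by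
        have h' := abs_sub_abs_le_abs_sub (bS ξ 0 l ω) (bS ξ 0 k₀ ω)
        rw [show bS ξ 0 l ω - bS ξ 0 k₀ ω = bS ξ k₀ l ω from by linarith] at h'
        exact h'
      linarith
    have hEmeas : ∀ k, MeasurableSet (Ek k) := by
      intro k
      have : Ek k = (⋂ j', ⋂ _ : j' < k, {ω | |bS ξ 0 j' ω| ≤ L})
          ∩ {ω | L < |bS ξ 0 k ω|} := by
        ext ω; simp only [hEk, Set.mem_setOf_eq, Set.mem_inter_iff, Set.mem_iInter]
      rw [this]
      exact MeasurableSet.inter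
        (MeasurableSet.iInter fun j' => MeasurableSet.iInter fun _ =>
          measurableSet_le ((measurable_bS hmeas 0 j').abs) measurable_const)
        (measurableSet_lt measurable_const ((measurable_bS hmeas 0 k).abs))
    have hprod : ∀ k ∈ Finset.Icc 1 M, P (Ek k ∩ Gk k) ≤ P (Ek k) * (2 * B) := by
      intro k hk
      set gg : ℕ → (↥(Tlo M k) → ℝ) → ℝ := fun j' w =>
        ∑ i : ↥(Tlo M k), if 0 ≤ ((i : Fin M) : ℕ) ∧ ((i : Fin M) : ℕ) < j' then w i else 0 with hgg
      set hh : ℕ → (↥(Thi M k) → ℝ) → ℝ := fun l w =>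
        ∑ i : ↥(Thi M k), if k ≤ ((i : Fin M) : ℕ) ∧ ((i : Fin M) : ℕ) < l then w i else 0 with hhh
      have keyg : ∀ (ω : Ω) (j' : ℕ), j' ≤ k →
          gg j' (fun i : ↥(Tlo M k) => ξ i ω) = bS ξ 0 j' ω := by
        intro ω j' hj'
        rw [bS_apply, sum_subtype_ite (Tlo M k) (fun i : Fin M => 0 ≤ (i:ℕ) ∧ (i:ℕ) < j')
          (fun i hi => by simp only [Tlo, Finset.mem_filter, Finset.mem_univ, true_and]; omega)
          (fun i => ξ i ω)]
      have keyh : ∀ (ω : Ω) (l : ℕ), hh l (fun i : ↥(Thi M k) => ξ i ω) = bS ξ k l ω := by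
        intro ω l
        rw [bS_apply, sum_subtype_ite (Thi M k) (fun i : Fin M => k ≤ (i:ℕ) ∧ (i:ℕ) < l)
          (fun i hi => by simp only [Thi, Finset.mem_filter, Finset.mem_univ, true_and]; omega)
          (fun i => ξ i ω)]
      have hErep : Ek k = (fun ω (i : ↥(Tlo M k)) => ξ i ω) ⁻¹'
          {w | (∀ j', j' < k → |gg j' w| ≤ L) ∧ L < |gg k w|} := by
        ext ω
        simp only [hEk, Set.mem_setOf_eq, Set.mem_preimage]
        constructor
        · rintro ⟨hj, hk'⟩
          exact ⟨fun j' h2 => by rw [keyg ω j' h2.le]; exact hj j' h2,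
            by rw [keyg ω k le_rfl]; exact hk'⟩
        · rintro ⟨hj, hk'⟩
          refine ⟨fun j' h2 => ?_, by rw [← keyg ω k le_rfl]; exact hk'⟩
          have := hj j' h2; rwa [keyg ω j' h2.le] at this
      have hGrep : Gk k = (fun ω (i : ↥(Thi M k)) => ξ i ω) ⁻¹'
          {w | ∃ l, k < l ∧ l ≤ M ∧ L < |hh l w|} := by
        ext ω
        simp only [hGk, Set.mem_setOf_eq, Set.mem_preimage]
        constructor
        · rintro ⟨l, h1, h2, h3⟩
          exact ⟨l, h1, h2, by rw [keyh ω l]; exact h3⟩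
        · rintro ⟨l, h1, h2, h3⟩
          exact ⟨l, h1, h2, by rwa [keyh ω l] at h3⟩
      have hAm : MeasurableSet {w : ↥(Tlo M k) → ℝ |
          (∀ j', j' < k → |gg j' w| ≤ L) ∧ L < |gg k w|} := by
        have : {w : ↥(Tlo M k) → ℝ | (∀ j', j' < k → |gg j' w| ≤ L) ∧ L < |gg k w|}
            = (⋂ j', ⋂ _ : j' < k, {w | |gg j' w| ≤ L}) ∩ {w | L < |gg k w|} := by
          ext w; simp only [Set.mem_setOf_eq, Set.mem_inter_iff, Set.mem_iInter]
        rw [this]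
        refine MeasurableSet.inter
          (MeasurableSet.iInter fun j' => MeasurableSet.iInter fun _ =>
            measurableSet_le (Measurable.abs ?_) measurable_const)
          (measurableSet_lt measurable_const (Measurable.abs ?_))
        · exact measurable_condSum (Tlo M k) (fun i : Fin M => 0 ≤ (i:ℕ) ∧ (i:ℕ) < j')
        · exact measurable_condSum (Tlo M k) (fun i : Fin M => 0 ≤ (i:ℕ) ∧ (i:ℕ) < k)
      have hBm : MeasurableSet {w : ↥(Thi M k) → ℝ | ∃ l, k < l ∧ l ≤ M ∧ L < |hh l w|} := by
        have : {w : ↥(Thi M k) → ℝ | ∃ l, k < l ∧ l ≤ M ∧ L < |hh l w|}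
            = ⋃ l, ⋃ _ : k < l, ⋃ _ : l ≤ M, {w | L < |hh l w|} := by
          ext w; simp only [Set.mem_setOf_eq, Set.mem_iUnion]
          constructor
          · rintro ⟨l, h1, h2, h3⟩; exact ⟨l, h1, h2, h3⟩
          · rintro ⟨l, h1, h2, h3⟩; exact ⟨l, h1, h2, h3⟩
        rw [this]
        refine MeasurableSet.iUnion fun l => MeasurableSet.iUnion fun _ =>
          MeasurableSet.iUnion fun _ =>
            measurableSet_lt measurable_const (Measurable.abs ?_)
        exact measurable_condSum (Thi M k) (fun i : Fin M => k ≤ (i:ℕ) ∧ (i:ℕ) < l)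
      have hGbound : P (Gk k) ≤ 2 * B := hetem k L hLt
      calc P (Ek k ∩ Gk k) = P (Ek k) * P (Gk k) := by
            rw [hErep, hGrep]
            exact indep_split P hind hmeas k hAm hBm
        _ ≤ P (Ek k) * (2 * B) := mul_le_mul_right hGbound _
    have hdisjE : Set.PairwiseDisjoint ↑(Finset.Icc 1 M) Ek := by
      intro x hx y hy hne
      have key : ∀ x y, x < y → Disjoint (Ek x) (Ek y) := by
        intro x y hxy
        rw [Set.disjoint_left]
        rintro ω ⟨_, h2⟩ ⟨h1', _⟩
        exact absurd h2 (not_lt.mpr (h1' x hxy))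
      rcases lt_or_gt_of_ne hne with h | h
      · exact key x y h
      · exact (key y x h).symm
    calc P (Qev (j+1)) ≤ P (⋃ k ∈ Finset.Icc 1 M, Ek k ∩ Gk k) := measure_mono hincl
      _ ≤ ∑ k ∈ Finset.Icc 1 M, P (Ek k ∩ Gk k) := measure_biUnion_finset_le _ _
      _ ≤ ∑ k ∈ Finset.Icc 1 M, P (Ek k) * (2 * B) := Finset.sum_le_sum hprod
      _ = (∑ k ∈ Finset.Icc 1 M, P (Ek k)) * (2 * B) := by rw [Finset.sum_mul]
      _ ≤ P (Qev j) * (2 * B) := by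
          refine mul_le_mul_left ?_ _
          rw [← measure_biUnion_finset hdisjE (fun k _ => hEmeas k)]
          refine measure_mono ?_
          intro ω hω
          simp only [Set.mem_iUnion] at hω
          obtain ⟨k, hk, hωk⟩ := hω
          exact ⟨k, (Finset.mem_Icc.mp hk).2, hωk.2⟩
      _ = (2 * B) * P (Qev j) := mul_comm _ _
  have hiter : ∀ j, P (Qev j) ≤ (2 * B)^(j+1) := by
    intro j
    induction j with
    | zero => simpa using hQ0
    | succ j ih =>
        calc P (Qev (j+1)) ≤ (2*B) * P (Qev j) := hstep j
          _ ≤ (2*B) * (2*B)^(j+1) := mul_le_mul_right ih _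
          _ = (2*B)^(j+2) := (pow_succ' _ _).symm
  refine le_trans (measure_mono ?_) (hiter J)
  intro ω hω
  refine ⟨M, le_rfl, ?_⟩
  rw [bS_univ]
  exact hω


theorem tail_summable (μ : Measure ℝ) [IsProbabilityMeasure μ] {p : ℝ} (hp1 : 1 ≤ p)
    (hmoment : Integrable (fun x : ℝ => |x| ^ (2 * p)) μ) {δ : ℝ} (hδ : 0 < δ)
    (m : ℕ → ℕ) (hm : StrictMono m) :
    ∑' n, (m n : ℝ≥0∞) * μ {x | δ * (m n : ℝ) ^ (1/p) < |x|} ≠ ∞ := by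
  have hp0 : 0 < p := lt_of_lt_of_le one_pos hp1
  have hstep1 : ∑' n, (m n : ℝ≥0∞) * μ {x | δ * (m n : ℝ) ^ (1/p) < |x|}
      ≤ ∑' k : ℕ, (k : ℝ≥0∞) * μ {x | δ * (k : ℝ) ^ (1/p) < |x|} :=
    ENNReal.tsum_comp_le_tsum_of_injective hm.injective
      (fun k : ℕ => (k : ℝ≥0∞) * μ {x | δ * (k : ℝ) ^ (1/p) < |x|})
  set s : ℕ → Set ℝ := fun k => {x | δ * (k : ℝ) ^ (1/p) < |x|} with hs
  have hsm : ∀ k, MeasurableSet (s k) := fun k =>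
    measurableSet_lt measurable_const measurable_abs
  set r : ℝ → ℝ := fun x => (|x| / δ) ^ p with hr
  have hr0 : ∀ x, 0 ≤ r x := fun x => Real.rpow_nonneg (by positivity) _
  -- pointwise counting bound
  have hcount : ∀ x k, x ∈ s k → (k : ℝ) < r x := by
    intro x k hx
    have h1 : (k : ℝ) ^ (1/p) < |x| / δ := by
      rw [lt_div_iff₀ hδ]
      rw [Set.mem_setOf_eq] at hx
      linarith [hx]
    have h2 : ((k : ℝ) ^ (1/p)) ^ p < (|x| / δ) ^ p :=
      Real.rpow_lt_rpow (Real.rpow_nonneg (Nat.cast_nonneg k) _) h1 hp0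
    have h3 : ((k:ℝ) ^ (1/p)) ^ p = (k:ℝ) := by
      rw [← Real.rpow_mul (Nat.cast_nonneg k), one_div_mul_cancel hp0.ne', Real.rpow_one]
    rwa [h3] at h2
  -- Tonelli
  have h1 : ∀ k : ℕ, (k : ℝ≥0∞) * μ (s k)
      = ∫⁻ x, (s k).indicator (fun _ => (k : ℝ≥0∞)) x ∂μ := fun k => by
    rw [lintegral_indicator_const (hsm k)]
  have htsum_eq : ∑' k : ℕ, (k : ℝ≥0∞) * μ (s k)
      = ∫⁻ x, ∑' k : ℕ, (s k).indicator (fun _ => (k : ℝ≥0∞)) x ∂μ := by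
    rw [lintegral_tsum (fun k : ℕ => ((measurable_const.indicator (hsm k)).aemeasurable))]
    exact tsum_congr h1
  have hpt : ∀ x, ∑' k : ℕ, (s k).indicator (fun _ => (k : ℝ≥0∞)) x
      ≤ ENNReal.ofReal ((r x + 1) ^ 2) := by
    intro x
    set K := ⌈r x⌉₊ with hK
    have hbound : ∀ k, (s k).indicator (fun _ => (k : ℝ≥0∞)) x
        ≤ if k < K then (K : ℝ≥0∞) else 0 := by
      intro k
      by_cases hx : x ∈ s k
      · have hkK : k < K := Nat.lt_ceil.mpr (hcount x k hx)
        rw [Set.indicator_of_mem hx, if_pos hkK]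
        exact_mod_cast Nat.cast_le.mpr hkK.le
      · rw [Set.indicator_of_notMem hx]
        exact bot_le
    calc ∑' k : ℕ, (s k).indicator (fun _ => (k : ℝ≥0∞)) x
        ≤ ∑' k : ℕ, (if k < K then (K : ℝ≥0∞) else 0) := ENNReal.tsum_le_tsum hbound
      _ = ∑ k ∈ Finset.range K, (if k < K then (K : ℝ≥0∞) else 0) := by
          refine tsum_eq_sum fun k hk => ?_
          rw [Finset.mem_range] at hk
          rw [if_neg hk]
      _ ≤ ∑ _k ∈ Finset.range K, (K : ℝ≥0∞) := by
          refine Finset.sum_le_sum fun k _ => ?_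
          split <;> simp
      _ = (K : ℝ≥0∞) * K := by rw [Finset.sum_const, Finset.card_range, nsmul_eq_mul]
      _ ≤ ENNReal.ofReal ((r x + 1) ^ 2) := by
          have hKr : (K : ℝ) ≤ r x + 1 := le_of_lt (Nat.ceil_lt_add_one (hr0 x))
          rw [show ((K : ℝ≥0∞)) = ENNReal.ofReal (K : ℝ) from (ENNReal.ofReal_natCast K).symm,
            ← ENNReal.ofReal_mul (Nat.cast_nonneg K)]
          apply ENNReal.ofReal_le_ofReal
          nlinarith [hr0 x, Nat.cast_nonneg (α := ℝ) K]
  -- integrability of the majorant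
  have hmaj : Integrable (fun x => (r x + 1)^2) μ := by
    have hmeasr : Measurable fun x : ℝ => (r x + 1)^2 := by
      apply Measurable.pow_const
      exact (((Real.continuous_rpow_const hp0.le).measurable).comp (measurable_abs.div_const δ)).add_const 1
    refine Integrable.mono' (g := fun x => 2 * (δ ^ (2*p))⁻¹ * |x| ^ (2*p) + 2)
      ((hmoment.const_mul (2 * (δ ^ (2*p))⁻¹)).add (integrable_const 2))
      hmeasr.aestronglyMeasurable (Eventually.of_forall fun x => ?_)
    rw [Real.norm_eq_abs, abs_of_nonneg (by positivity)]
    have hsq : (r x)^2 = |x| ^ (2*p) * (δ ^ (2*p))⁻¹ := by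
      simp only [hr]
      rw [Real.div_rpow (abs_nonneg x) hδ.le]
      rw [div_pow, ← Real.rpow_natCast (|x| ^ p) 2, ← Real.rpow_natCast (δ ^ p) 2,
        ← Real.rpow_mul (abs_nonneg x), ← Real.rpow_mul hδ.le]
      rw [show p * ((2:ℕ):ℝ) = 2 * p by push_cast; ring]
      rw [div_eq_mul_inv]
    nlinarith [hr0 x, sq_nonneg (r x - 1), hsq]
  have hfin : ∫⁻ x, ENNReal.ofReal ((r x + 1)^2) ∂μ < ∞ := hmaj.lintegral_lt_top
  refine ne_of_lt (lt_of_le_of_lt hstep1 ?_)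
  rw [htsum_eq]
  exact lt_of_le_of_lt (lintegral_mono hpt) hfin


lemma abs_int_le {α : Type*} [MeasurableSpace α] (ν : Measure α) (f : α → ℝ) :
    |∫ x, f x ∂ν| ≤ ∫ x, |f x| ∂ν := by
  simpa [Real.norm_eq_abs] using norm_integral_le_integral_norm (μ := ν) f

end MZAux

open MZAux in
theorem triangular_array_MZ_strong_law {Ω : Type*} [MeasurableSpace Ω] (P : Measure Ω)
    [IsProbabilityMeasure P] (m : ℕ → ℕ) (hm_mono : StrictMono m)
    (hm_top : Tendsto m atTop atTop)
    (μ : Measure ℝ) [IsProbabilityMeasure μ] (p : ℝ) (hp1 : 1 ≤ p) (hp2 : p < 2)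
    (hmean : ∫ x, x ∂μ = 0)
    (hmoment : Integrable (fun x : ℝ => |x| ^ (2 * p)) μ)
    (X : (n : ℕ) → Fin (m n) → Ω → ℝ)
    (hmeas : ∀ n i, Measurable (X n i))
    (hindep : ∀ n, iIndepFun (X n) P)
    (hdist : ∀ n i, Measure.map (X n i) P = μ) :
    ∀ᵐ ω ∂P, Tendsto
      (fun n : ℕ => ((m n : ℝ) ^ (-(1 / p)) : ℝ) * ∑ i : Fin (m n), X n i ω)
      atTop (nhds 0) := by
  classical
  have hp0 : 0 < p := lt_of_lt_of_le one_pos hp1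
  set A := ∫ x, |x| ^ (2*p) ∂μ with hAdef
  have hA0 : 0 ≤ A := integral_nonneg fun x => Real.rpow_nonneg (abs_nonneg x) _
  set K := 1 + A with hKdef
  have hK0 : (0:ℝ) ≤ K := by linarith
  have hdom : ∀ x : ℝ, |x| ≤ 1 + |x| ^ (2*p) := by
    intro x
    rcases le_or_gt (|x|) 1 with h | h
    · linarith [Real.rpow_nonneg (abs_nonneg x) (2*p)]
    · have h2 : |x| ^ (1:ℝ) ≤ |x| ^ (2*p) :=
        Real.rpow_le_rpow_of_exponent_le h.le (by linarith)
      rw [Real.rpow_one] at h2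
      linarith
  have hXint : Integrable (fun x : ℝ => x) μ := by
    refine Integrable.mono' ((integrable_const 1).add hmoment)
      measurable_id.aestronglyMeasurable (Eventually.of_forall fun x => ?_)
    simpa [Real.norm_eq_abs] using hdom x
  have hsqdom : ∀ x : ℝ, x^2 ≤ 1 + |x| ^ (2*p) := by
    intro x
    rcases le_or_gt (x^2) 1 with h | h
    · linarith [Real.rpow_nonneg (abs_nonneg x) (2*p)]
    · have h1 : (1:ℝ) ≤ |x| := by nlinarith [abs_nonneg x, sq_abs x]
      have h2 : x^2 = |x| ^ ((2:ℕ):ℝ) := by rw [Real.rpow_natCast, sq_abs]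
      have h3 : |x| ^ ((2:ℕ):ℝ) ≤ |x| ^ (2*p) :=
        Real.rpow_le_rpow_of_exponent_le h1 (by push_cast; nlinarith)
      linarith [h2 ▸ h3]
  have main : ∀ ε : ℝ, 0 < ε →
      ∀ᵐ ω ∂P, ∀ᶠ n in atTop, |∑ i, X n i ω| ≤ ε * (m n : ℝ) ^ (1/p) := by
    intro ε hε
    have h2p : 0 < 2/p - 1 := sub_pos.mpr ((one_lt_div hp0).mpr hp2)
    obtain ⟨J, hJgt⟩ := exists_nat_gt (1 / (2/p - 1))
    have hJs : 1 < ((J:ℝ)+1) * (2/p - 1) := by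
      have h' : 1 < (J:ℝ) * (2/p - 1) := (div_lt_iff₀ h2p).mp hJgt
      nlinarith
    set s2 := ((J:ℝ)+1) * (2/p - 1) with hs2
    set δ := ε / (4 * 3^J) with hδdef
    have hδ : 0 < δ := by positivity
    obtain ⟨N₁, hN₁⟩ := Filter.eventually_atTop.mp
      (hm_top.eventually_ge_atTop (max 1 ⌈2 * A * δ^(1-2*p) / ε⌉₊))
    set N := max N₁ 1 with hNdef
    have hmn : ∀ n, N ≤ n → 1 ≤ m n ∧ 2 * A * δ^(1-2*p) ≤ ε * m n := by
      intro n hn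
      have h := hN₁ n (le_trans (le_max_left _ _) hn)
      refine ⟨le_trans (le_max_left 1 _) h, ?_⟩
      have h2 : (⌈2 * A * δ^(1-2*p) / ε⌉₊ : ℝ) ≤ m n := by
        exact_mod_cast le_trans (le_max_right 1 _) h
      have h3 : 2 * A * δ^(1-2*p) / ε ≤ m n := le_trans (Nat.le_ceil _) h2
      calc 2 * A * δ^(1-2*p) = (2 * A * δ^(1-2*p) / ε) * ε := by field_simp
        _ ≤ (m n : ℝ) * ε := mul_le_mul_of_nonneg_right h3 hε.le
        _ = ε * m n := mul_comm _ _
    set t₀ : ℕ → ℝ := fun n => δ * (m n : ℝ)^(1/p) with ht₀def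
    have ht₀0 : ∀ n, 0 ≤ t₀ n := fun n =>
      mul_nonneg hδ.le (Real.rpow_nonneg (Nat.cast_nonneg _) _)
    set g : ℕ → ℝ → ℝ := fun n x => if |x| ≤ t₀ n then x else 0 with hgdef
    have hgmeas : ∀ n, Measurable (g n) := fun n =>
      Measurable.ite (measurableSet_le measurable_abs measurable_const)
        measurable_id measurable_const
    have hgabs : ∀ n x, |g n x| ≤ t₀ n := by
      intro n x
      simp only [hgdef]
      split
      · assumption
      · simpa using ht₀0 n
    have hgabs2 : ∀ n x, |g n x| ≤ |x| := by
      intro n x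
      simp only [hgdef]
      split
      · exact le_rfl
      · simpa using abs_nonneg x
    have hgint : ∀ n, Integrable (g n) μ := fun n =>
      Integrable.mono' (integrable_const (t₀ n)) (hgmeas n).aestronglyMeasurable
        (Eventually.of_forall fun x => by simpa [Real.norm_eq_abs] using hgabs n x)
    set mu_t : ℕ → ℝ := fun n => ∫ x, g n x ∂μ with hmu_def
    have hmu_abs : ∀ n, |mu_t n| ≤ t₀ n := by
      intro n
      calc |mu_t n| ≤ ∫ x, |g n x| ∂μ := abs_int_le μ (g n)
        _ ≤ ∫ _x, t₀ n ∂μ := integral_mono (hgint n).abs (integrable_const _)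
            (fun x => hgabs n x)
        _ = t₀ n := by simp
    have hmu_tail : ∀ n, 1 ≤ m n → |mu_t n| ≤ (t₀ n)^(1-2*p) * A := by
      intro n hn1
      have hMpos : (0:ℝ) < m n := by exact_mod_cast hn1
      have ht₀pos : 0 < t₀ n := by
        rw [ht₀def]
        exact mul_pos hδ (Real.rpow_pos_of_pos hMpos _)
      have hpt : ∀ x : ℝ, |x - g n x| ≤ (t₀ n)^(1-2*p) * |x|^(2*p) := by
        intro x
        simp only [hgdef]
        by_cases h : |x| ≤ t₀ n
        · rw [if_pos h]
          simp only [sub_self, abs_zero]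
          positivity
        · rw [if_neg h]
          push_neg at h
          rw [sub_zero]
          have hx0 : 0 < |x| := lt_trans ht₀pos h
          have e1 : |x| ^ (2*p) = |x| ^ (1:ℝ) * |x| ^ (2*p - 1) := by
            rw [← Real.rpow_add hx0]; norm_num
          have e2 : (t₀ n)^(2*p-1) ≤ |x|^(2*p-1) :=
            Real.rpow_le_rpow ht₀pos.le h.le (by linarith)
          have e3 : (1:ℝ) = (t₀ n)^(1-2*p) * (t₀ n)^(2*p-1) := by
            rw [← Real.rpow_add ht₀pos]; norm_num
          calc |x| = |x| * 1 := (mul_one _).symm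
            _ ≤ |x| * ((t₀ n)^(1-2*p) * |x|^(2*p-1)) := by
                refine mul_le_mul_of_nonneg_left ?_ (abs_nonneg x)
                calc (1:ℝ) = (t₀ n)^(1-2*p) * (t₀ n)^(2*p-1) := e3
                  _ ≤ (t₀ n)^(1-2*p) * |x|^(2*p-1) :=
                      mul_le_mul_of_nonneg_left e2 (Real.rpow_nonneg ht₀pos.le _)
            _ = (t₀ n)^(1-2*p) * |x|^(2*p) := by rw [e1, Real.rpow_one]; ring
      have hint2 : Integrable (fun x => x - g n x) μ := hXint.sub (hgint n)
      have hneg : mu_t n = - ∫ x, (x - g n x) ∂μ := by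
        rw [integral_sub hXint (hgint n), hmean]
        simp [hmu_def]
      rw [hneg, abs_neg]
      calc |∫ x, (x - g n x) ∂μ| ≤ ∫ x, |x - g n x| ∂μ := abs_int_le μ _
        _ ≤ ∫ x, (t₀ n)^(1-2*p) * |x|^(2*p) ∂μ :=
            integral_mono hint2.abs (hmoment.const_mul _) hpt
        _ = (t₀ n)^(1-2*p) * A := by rw [integral_const_mul]
    set ξ : (n : ℕ) → Fin (m n) → Ω → ℝ := fun n i ω => g n (X n i ω) - mu_t n with hξdef
    have hξmeas : ∀ n i, Measurable (ξ n i) := fun n i =>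
      ((hgmeas n).comp (hmeas n i)).sub_const _
    have hξind : ∀ n, iIndepFun
        (ξ n) P := fun n =>
      (hindep n).comp (fun _ => fun y => g n y - mu_t n) (fun _ => (hgmeas n).sub_const _)
    have hξb : ∀ n i ω, |ξ n i ω| ≤ 2 * t₀ n := by
      intro n i ω
      have h1 := hgabs n (X n i ω)
      have h2 := hmu_abs n
      have h3 : |g n (X n i ω) - mu_t n| ≤ |g n (X n i ω)| + |mu_t n| := abs_sub _ _
      simp only [hξdef]
      linarith
    have hgXint : ∀ n i, Integrable (fun ω => g n (X n i ω)) P := by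
      intro n i
      refine Integrable.mono' (integrable_const (t₀ n))
        (((hgmeas n).comp (hmeas n i)).aestronglyMeasurable)
        (Eventually.of_forall fun ω => by simpa [Real.norm_eq_abs] using hgabs n (X n i ω))
    have hgXval : ∀ n i, ∫ ω, g n (X n i ω) ∂P = mu_t n := by
      intro n i
      simp only [hmu_def]
      rw [← hdist n i, integral_map (hmeas n i).aemeasurable (hgmeas n).aestronglyMeasurable]
    have hξmean : ∀ n i, ∫ ω, ξ n i ω ∂P = 0 := by
      intro n i
      simp only [hξdef]
      rw [integral_sub (hgXint n i) (integrable_const _), hgXval n i, integral_const]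
      simp
    have hgX2int : ∀ n i, Integrable (fun ω => (g n (X n i ω))^2) P := by
      intro n i
      refine Integrable.mono' (integrable_const ((t₀ n)^2))
        ((((hgmeas n).comp (hmeas n i)).pow_const 2).aestronglyMeasurable)
        (Eventually.of_forall fun ω => ?_)
      rw [Real.norm_eq_abs]
      have h1 := hgabs n (X n i ω)
      have h2 := abs_nonneg (g n (X n i ω))
      rw [abs_of_nonneg (sq_nonneg _)]
      nlinarith [sq_abs (g n (X n i ω))]
    have hξ2 : ∀ n i, ∫ ω, (ξ n i ω)^2 ∂P ≤ K := by
      intro n i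
      have hexp : (fun ω => (ξ n i ω)^2)
          = fun ω => (g n (X n i ω))^2 - 2 * mu_t n * g n (X n i ω) + (mu_t n)^2 := by
        funext ω; simp only [hξdef]; ring
      have i1 : Integrable (fun ω => 2 * mu_t n * g n (X n i ω)) P := (hgXint n i).const_mul _
      have isub : Integrable
          (fun ω => (g n (X n i ω))^2 - 2 * mu_t n * g n (X n i ω)) P :=
        (hgX2int n i).sub i1
      have e : ∫ ω, (ξ n i ω)^2 ∂P
          = ∫ ω, (g n (X n i ω))^2 ∂P - 2 * mu_t n * mu_t n + (mu_t n)^2 := by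
        rw [hexp, integral_add isub (integrable_const _),
          integral_sub (hgX2int n i) i1, integral_const_mul, hgXval n i, integral_const]
        simp
      have h2 : ∫ ω, (g n (X n i ω))^2 ∂P ≤ K := by
        have hmap : ∫ ω, (g n (X n i ω))^2 ∂P = ∫ x, (g n x)^2 ∂μ := by
          rw [← hdist n i, integral_map (hmeas n i).aemeasurable
            ((hgmeas n).pow_const 2).aestronglyMeasurable]
        rw [hmap]
        have hg2m : Integrable (fun x => (g n x)^2) μ := by
          refine Integrable.mono' (integrable_const ((t₀ n)^2))
            ((hgmeas n).pow_const 2).aestronglyMeasurable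
            (Eventually.of_forall fun x => ?_)
          rw [Real.norm_eq_abs, abs_of_nonneg (sq_nonneg _)]
          nlinarith [hgabs n x, abs_nonneg (g n x), sq_abs (g n x)]
        calc ∫ x, (g n x)^2 ∂μ ≤ ∫ x, (1 + |x|^(2*p)) ∂μ := by
              refine integral_mono hg2m ((integrable_const 1).add hmoment) fun x => ?_
              have h1 := hgabs2 n x
              have h2 := hsqdom x
              nlinarith [sq_abs (g n x), sq_abs x, abs_nonneg (g n x), abs_nonneg x]
          _ = K := by
              rw [integral_add (integrable_const 1) hmoment]
              simp [hKdef, hAdef]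
      rw [e]
      nlinarith [sq_nonneg (mu_t n)]
    set tt : ℕ → ℝ := fun n => (ε/2) * (m n : ℝ)^(1/p) / 3^J with httdef
    set An : ℕ → Set Ω := fun n => {ω | ε * (m n : ℝ)^(1/p) < |∑ i, X n i ω|} with hAn
    have hshift : ∀ n, N ≤ n → (m n : ℝ) * |mu_t n| ≤ (ε/2) * (m n : ℝ)^(1/p) := by
      intro n hn
      obtain ⟨hn1, hn2⟩ := hmn n hn
      have hMpos : (0:ℝ) < m n := by exact_mod_cast hn1
      have hMp0 : (0:ℝ) < (m n : ℝ)^(1/p) := Real.rpow_pos_of_pos hMpos _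
      have h1 : (m n:ℝ) * |mu_t n| ≤ (m n:ℝ) * ((t₀ n)^(1-2*p) * A) :=
        mul_le_mul_of_nonneg_left (hmu_tail n hn1) hMpos.le
      have e1 : (t₀ n)^(1-2*p) = δ^(1-2*p) * ((m n:ℝ)^(1/p))^(1-2*p) := by
        rw [ht₀def]
        exact Real.mul_rpow hδ.le hMp0.le
      have e2 : ((m n:ℝ)^(1/p))^(1-2*p) = (m n:ℝ)^((1/p)*(1-2*p)) :=
        (Real.rpow_mul hMpos.le _ _).symm
      have e3 : (m n:ℝ) * (m n:ℝ)^((1/p)*(1-2*p)) = (m n:ℝ)^(1/p) / (m n:ℝ) := by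
        nth_rewrite 1 [show (m n:ℝ) = (m n:ℝ)^(1:ℝ) from (Real.rpow_one _).symm]
        rw [← Real.rpow_add hMpos,
          show (1:ℝ) + (1/p)*(1-2*p) = 1/p - 1 from by field_simp; ring,
          Real.rpow_sub hMpos, Real.rpow_one]
      calc (m n:ℝ) * |mu_t n| ≤ (m n:ℝ) * ((t₀ n)^(1-2*p) * A) := h1
        _ = (A * δ^(1-2*p)) * ((m n:ℝ) * (m n:ℝ)^((1/p)*(1-2*p))) := by rw [e1, e2]; ring
        _ = (A * δ^(1-2*p)) * ((m n:ℝ)^(1/p) / (m n:ℝ)) := by rw [e3]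
        _ = (A * δ^(1-2*p) / (m n:ℝ)) * (m n:ℝ)^(1/p) := by ring
        _ ≤ (ε/2) * (m n:ℝ)^(1/p) := by
            refine mul_le_mul_of_nonneg_right ?_ hMp0.le
            rw [div_le_iff₀ hMpos]
            linarith
    have hincl : ∀ n, N ≤ n → An n ⊆ (⋃ i, {ω | t₀ n < |X n i ω|})
        ∪ {ω | (3:ℝ)^J * tt n < |∑ i, ξ n i ω|} := by
      intro n hn ω hω
      simp only [hAn, Set.mem_setOf_eq] at hω
      by_cases hbig : ∃ i, t₀ n < |X n i ω|
      · left
        obtain ⟨i, hi⟩ := hbig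
        exact Set.mem_iUnion.mpr ⟨i, hi⟩
      · right
        push_neg at hbig
        have hgx : ∀ i, g n (X n i ω) = X n i ω := fun i => if_pos (hbig i)
        have hsum : ∑ i, ξ n i ω = (∑ i, X n i ω) - (m n : ℝ) * mu_t n := by
          simp only [hξdef]
          rw [Finset.sum_sub_distrib]
          congr 1
          · exact Finset.sum_congr rfl fun i _ => hgx i
          · rw [Finset.sum_const, Finset.card_univ, Fintype.card_fin, nsmul_eq_mul]
        have h3J : (3:ℝ)^J * tt n = (ε/2) * (m n:ℝ)^(1/p) := by
          rw [httdef]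
          field_simp
        rw [Set.mem_setOf_eq, h3J, hsum]
        have habs : |∑ i, X n i ω| - (m n:ℝ) * |mu_t n|
            ≤ |∑ i, X n i ω - (m n:ℝ) * mu_t n| := by
          have h' := abs_sub_abs_le_abs_sub (∑ i, X n i ω) ((m n:ℝ) * mu_t n)
          have h'' : |(m n:ℝ) * mu_t n| = (m n:ℝ) * |mu_t n| := by
            rw [abs_mul, abs_of_nonneg (Nat.cast_nonneg (m n))]
          linarith
        linarith [hshift n hn]
    have hrow : ∀ n, N ≤ n → P {ω | (3:ℝ)^J * tt n < |∑ i, ξ n i ω|}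
        ≤ ENNReal.ofReal ((2 * (9 * K * ((3:ℝ)^J*2/ε)^2))^(J+1) * (n:ℝ)^(-s2)) := by
      intro n hn
      obtain ⟨hn1, _⟩ := hmn n hn
      have hMpos : (0:ℝ) < m n := by exact_mod_cast hn1
      have hMp0 : (0:ℝ) < (m n:ℝ)^(1/p) := Real.rpow_pos_of_pos hMpos _
      have httpos : 0 < tt n := by
        rw [httdef]; positivity
      have hceq : 2 * t₀ n = tt n := by
        rw [ht₀def, httdef, hδdef]
        field_simp
        ring
      have hrb := row_bound P (hξind n) (hξmeas n) (hξb n) (hξmean n) (hξ2 n) hK0 httpos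
        (le_of_eq hceq) J
      refine hrb.trans ?_
      have hMsq : ((m n:ℝ)^(1/p))^(2:ℕ) = (m n:ℝ)^(2/p) := by
        rw [← Real.rpow_natCast ((m n:ℝ)^(1/p)) 2, ← Real.rpow_mul hMpos.le]
        congr 1
        push_cast
        ring
      have htt2 : (tt n)^2 = (ε/2)^2/((3:ℝ)^J)^2 * (m n:ℝ)^(2/p) := by
        rw [httdef, div_pow, mul_pow, hMsq]
        ring
      have harg : 9 * ((m n:ℝ) * K) / (tt n)^2
          = (9 * K * ((3:ℝ)^J*2/ε)^2) * (m n:ℝ)^(1-2/p) := by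
        rw [htt2, Real.rpow_sub hMpos, Real.rpow_one]
        obtain ⟨a, ha, hae⟩ : ∃ a : ℝ, 0 < a ∧ (m n:ℝ)^(2/p) = a :=
          ⟨_, Real.rpow_pos_of_pos hMpos _, rfl⟩
        rw [hae]
        have h3Jne : ((3:ℝ)^J) ≠ 0 := by positivity
        field_simp
      rw [harg]
      set CC := 9 * K * ((3:ℝ)^J*2/ε)^2 with hCC
      have hCC0 : 0 ≤ CC := by positivity
      have hM12 : 0 ≤ (m n:ℝ)^(1-2/p) := Real.rpow_nonneg hMpos.le _
      rw [show (2:ℝ≥0∞) * ENNReal.ofReal (CC * (m n:ℝ)^(1-2/p))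
            = ENNReal.ofReal (2 * (CC * (m n:ℝ)^(1-2/p))) from by
          rw [ENNReal.ofReal_mul (by norm_num : (0:ℝ) ≤ 2)]
          norm_num]
      rw [← ENNReal.ofReal_pow (by positivity)]
      apply ENNReal.ofReal_le_ofReal
      have hexp2 : (2 * (CC * (m n:ℝ)^(1-2/p)))^(J+1)
          = (2*CC)^(J+1) * ((m n:ℝ)^(1-2/p))^(J+1) := by
        rw [show 2 * (CC * (m n:ℝ)^(1-2/p)) = (2*CC) * ((m n:ℝ)^(1-2/p)) from by ring,
          mul_pow]
      rw [hexp2]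
      have hrpow : ((m n:ℝ)^(1-2/p))^(J+1) = (m n:ℝ)^(-s2) := by
        rw [← Real.rpow_natCast ((m n:ℝ)^(1-2/p)) (J+1), ← Real.rpow_mul hMpos.le]
        congr 1
        rw [hs2]
        push_cast
        ring
      rw [hrpow]
      have hns : (m n:ℝ)^(-s2) ≤ (n:ℝ)^(-s2) := by
        have hn1' : 1 ≤ n := le_trans (le_max_right N₁ 1) hn
        have hn0 : (0:ℝ) < n := by exact_mod_cast hn1'
        refine Real.rpow_le_rpow_of_nonpos hn0 ?_ (by rw [hs2] at hJs ⊢; nlinarith)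
        exact_mod_cast hm_mono.le_apply
      have h2CC : 0 ≤ (2*CC)^(J+1) := by positivity
      exact mul_le_mul_of_nonneg_left hns h2CC
    have htail : ∀ n, P (⋃ i, {ω | t₀ n < |X n i ω|})
        ≤ (m n : ℝ≥0∞) * μ {x | t₀ n < |x|} := by
      intro n
      have hone : ∀ i, P {ω | t₀ n < |X n i ω|} = μ {x | t₀ n < |x|} := by
        intro i
        have hpre : {ω | t₀ n < |X n i ω|} = X n i ⁻¹' {x | t₀ n < |x|} := rfl
        rw [hpre, ← Measure.map_apply (hmeas n i)
          (measurableSet_lt measurable_const measurable_abs), hdist n i]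
      calc P (⋃ i, {ω | t₀ n < |X n i ω|})
          ≤ ∑' i : Fin (m n), P {ω | t₀ n < |X n i ω|} := measure_iUnion_le _
        _ = ∑' _i : Fin (m n), μ {x | t₀ n < |x|} := tsum_congr hone
        _ = (m n : ℝ≥0∞) * μ {x | t₀ n < |x|} := by
            rw [tsum_fintype]
            simp [Finset.sum_const, Finset.card_univ, nsmul_eq_mul]
    set sB : ℕ → Set Ω := fun n => if n < N then ∅ else An n with hsB
    have hsum : ∑' n, P (sB n) ≠ ∞ := by
      have hle : ∀ n, P (sB n) ≤ (m n : ℝ≥0∞) * μ {x | δ * (m n:ℝ)^(1/p) < |x|}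
          + ENNReal.ofReal ((2 * (9 * K * ((3:ℝ)^J*2/ε)^2))^(J+1) * (n:ℝ)^(-s2)) := by
        intro n
        by_cases hn : n < N
        · simp only [hsB, if_pos hn, measure_empty]
          exact bot_le
        · push_neg at hn
          simp only [hsB, if_neg (not_lt.mpr hn)]
          calc P (An n)
              ≤ P ((⋃ i, {ω | t₀ n < |X n i ω|})
                  ∪ {ω | (3:ℝ)^J * tt n < |∑ i, ξ n i ω|}) := measure_mono (hincl n hn)
            _ ≤ P (⋃ i, {ω | t₀ n < |X n i ω|})
                + P {ω | (3:ℝ)^J * tt n < |∑ i, ξ n i ω|} := measure_union_le _ _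
            _ ≤ (m n : ℝ≥0∞) * μ {x | δ * (m n:ℝ)^(1/p) < |x|}
                + ENNReal.ofReal ((2 * (9 * K * ((3:ℝ)^J*2/ε)^2))^(J+1) * (n:ℝ)^(-s2)) := by
                refine add_le_add (le_trans (htail n) (le_of_eq ?_)) (hrow n hn)
                rw [ht₀def]
      refine ne_top_of_le_ne_top ?_ (ENNReal.tsum_le_tsum hle)
      rw [ENNReal.tsum_add]
      refine ENNReal.add_ne_top.mpr ⟨tail_summable μ hp1 hmoment hδ m hm_mono, ?_⟩
      have hnn : ∀ n : ℕ, 0 ≤ (2 * (9 * K * ((3:ℝ)^J*2/ε)^2))^(J+1) * (n:ℝ)^(-s2) := by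
        intro n
        have : (0:ℝ) ≤ (n:ℝ)^(-s2) := Real.rpow_nonneg (Nat.cast_nonneg n) _
        positivity
      have hsummable : Summable
          (fun n : ℕ => (2 * (9 * K * ((3:ℝ)^J*2/ε)^2))^(J+1) * (n:ℝ)^(-s2)) := by
        apply Summable.mul_left
        refine Real.summable_nat_rpow.mpr ?_
        rw [hs2] at hJs
        linarith
      rw [← ENNReal.ofReal_tsum_of_nonneg hnn hsummable]
      exact ENNReal.ofReal_ne_top
    have hBC := MeasureTheory.ae_eventually_notMem hsum
    filter_upwards [hBC] with ω hω
    filter_upwards [hω, eventually_ge_atTop N] with n h1 h2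
    simp only [hsB, if_neg (not_lt.mpr h2)] at h1
    simp only [hAn, Set.mem_setOf_eq, not_lt] at h1
    exact h1
  have hae := ae_all_iff.mpr (fun q : ℕ => main (1/((q:ℝ)+1)) (by positivity))
  filter_upwards [hae] with ω hω
  rw [NormedAddCommGroup.tendsto_nhds_zero]
  intro ε hε
  obtain ⟨q, hq⟩ := exists_nat_one_div_lt hε
  filter_upwards [hω q, hm_top.eventually_ge_atTop 1] with n hn1 hn2
  have hM1 : (1:ℝ) ≤ (m n : ℝ) := by exact_mod_cast hn2
  have hMpos : (0:ℝ) < (m n : ℝ) := by linarith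
  rw [Real.norm_eq_abs, abs_mul, abs_of_nonneg (Real.rpow_nonneg hMpos.le _)]
  have hpow : (m n:ℝ)^(-(1/p)) * ((m n:ℝ)^(1/p)) = 1 := by
    rw [← Real.rpow_add hMpos]
    norm_num
  calc (m n:ℝ)^(-(1/p)) * |∑ i, X n i ω|
      ≤ (m n:ℝ)^(-(1/p)) * ((1/((q:ℝ)+1)) * (m n:ℝ)^(1/p)) :=
        mul_le_mul_of_nonneg_left hn1 (Real.rpow_nonneg hMpos.le _)
    _ = 1/((q:ℝ)+1) := by
        rw [mul_comm (1/((q:ℝ)+1)) ((m n:ℝ)^(1/p)), ← mul_assoc, hpow, one_mul]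
    _ < ε := hq
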